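/- For any positive integers L, y, z with y odd and y > 1, setting m = 2(y−1)z, every coefficient in the power series expansion of 1/((q^z; q^m)_{L+1} (q^{m+2z}; q^{2m})_L) − 1/((q^{yz}; q^m)_L (q^{2z}; q^{2m})_{L+1}) is nonnegative. -/

import Mathlib

open Finset PowerSeries

/-- `(q^c; q^m)_L = ∏_{j=0}^{L-1} (1 - q^{c+jm})` as a formal power series over `ℚ`. -/
noncomputable def qp (c m L : ℕ) : PowerSeries ℚ :=
  ∏ j ∈ Finset.range L, (1 - (PowerSeries.X : PowerSeries ℚ) ^ (c + j * m))

namespace LHaux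

noncomputable def g (p : ℕ) : PowerSeries ℚ :=
  PowerSeries.mk fun n => if p ∣ n then 1 else 0

lemma g_spec {p : ℕ} (hp : 0 < p) :
    (1 - (PowerSeries.X : PowerSeries ℚ) ^ p) * g p = 1 := by
  ext n
  rw [sub_mul, one_mul, map_sub, mul_comm, PowerSeries.coeff_mul_X_pow',
    PowerSeries.coeff_one, g]
  simp only [PowerSeries.coeff_mk]
  by_cases hd : p ∣ n
  · by_cases hpn : p ≤ n
    · have h0 : n ≠ 0 := by omega
      have hd' : p ∣ n - p := Nat.dvd_sub hd dvd_rfl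
      simp [hd, hpn, hd', h0]
    · have h0 : n = 0 := by
        rcases hd with ⟨c, rfl⟩
        rcases Nat.eq_zero_or_pos c with rfl | hc
        · simp
        · exact absurd (Nat.le_mul_of_pos_right p hc) hpn
      simp [hd, hpn, h0, hp.ne']
  · have h0 : n ≠ 0 := by rintro rfl; exact hd (dvd_zero p)
    by_cases hpn : p ≤ n
    · have hd' : ¬ p ∣ n - p := by
        intro h
        exact hd (by
          have := Nat.dvd_add h (dvd_refl p)
          rwa [Nat.sub_add_cancel hpn] at this)
      simp [hd, hpn, hd', h0]
    · simp [hd, hpn, h0]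

def NN (f : PowerSeries ℚ) : Prop := ∀ n, 0 ≤ PowerSeries.coeff (R := ℚ) n f

lemma nn_one : NN 1 := by
  intro n; rw [PowerSeries.coeff_one]; split <;> norm_num

lemma nn_mul {f h : PowerSeries ℚ} (hf : NN f) (hh : NN h) : NN (f * h) := by
  intro n
  rw [PowerSeries.coeff_mul]
  exact Finset.sum_nonneg fun p _ => mul_nonneg (hf _) (hh _)

lemma nn_add {f h : PowerSeries ℚ} (hf : NN f) (hh : NN h) : NN (f + h) := by
  intro n; rw [map_add]; exact add_nonneg (hf _) (hh _)

lemma nn_sum {ι : Type*} {s : Finset ι} {f : ι → PowerSeries ℚ}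
    (h : ∀ i ∈ s, NN (f i)) : NN (∑ i ∈ s, f i) := by
  intro n; rw [map_sum]; exact Finset.sum_nonneg fun i hi => h i hi n

lemma nn_prod {ι : Type*} {s : Finset ι} {f : ι → PowerSeries ℚ}
    (h : ∀ i ∈ s, NN (f i)) : NN (∏ i ∈ s, f i) :=
  Finset.prod_induction f NN (fun _ _ ha hb => nn_mul ha hb) nn_one h

lemma nn_X_pow (p : ℕ) : NN ((PowerSeries.X : PowerSeries ℚ) ^ p) := by
  intro n; rw [PowerSeries.coeff_X_pow]; split <;> norm_num

lemma nn_g (p : ℕ) : NN (g p) := by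
  intro n; rw [g, PowerSeries.coeff_mk]; split <;> norm_num

lemma nn_one_add_X_pow (p : ℕ) : NN (1 + (PowerSeries.X : PowerSeries ℚ) ^ p) :=
  nn_add nn_one (nn_X_pow p)

lemma qp_mul_g (c M n : ℕ) (hc : 0 < c) :
    qp c M n * ∏ j ∈ Finset.range n, g (c + j * M) = 1 := by
  rw [qp, ← Finset.prod_mul_distrib]
  rw [Finset.prod_congr rfl (fun j _ => g_spec (p := c + j * M) (by positivity))]
  exact Finset.prod_const_one

end LHaux

open LHaux

theorem lecture_hall_odd (L y z m : ℕ) (hL : 0 < L) (hy : 1 < y) (hodd : Odd y)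
    (hz : 0 < z) (hm : m = 2 * (y - 1) * z) (x : ℕ) :
    0 ≤ PowerSeries.coeff (R := ℚ) x
      ((qp z m (L + 1) * qp (m + 2 * z) (2 * m) L)⁻¹
        - (qp (y * z) m L * qp (2 * z) (2 * m) (L + 1))⁻¹) := by
  classical
  obtain ⟨k, hk⟩ := hodd
  have hk0 : 0 < k := by omega
  have hm' : m = 4 * k * z := by
    have h1 : y - 1 = 2 * k := by omega
    rw [hm, h1]; ring
  set XX : PowerSeries ℚ := PowerSeries.X with hXX
  set A : PowerSeries ℚ := qp z m (L + 1) * qp (m + 2 * z) (2 * m) L with hA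
  set B : PowerSeries ℚ := qp (y * z) m L * qp (2 * z) (2 * m) (L + 1) with hB
  set Re : PowerSeries ℚ := ∏ j ∈ Finset.range (L + 1), (1 + XX ^ (z + j * m)) with hRe
  set Ro : PowerSeries ℚ := ∏ j ∈ Finset.range L, (1 + XX ^ (y * z + j * m)) with hRo
  set H : PowerSeries ℚ :=
    (∏ j ∈ Finset.range (L + 1), g (2 * z + j * (2 * m))) *
      (∏ j ∈ Finset.range L, g ((m + 2 * z) + j * (2 * m))) with hH
  -- key exponent identities
  have key1 : ∀ j : ℕ, 2 * z + j * (2 * m) = (z + j * m) * 2 := fun j => by ring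
  have key2 : ∀ j : ℕ, (m + 2 * z) + j * (2 * m) = (y * z + j * m) * 2 := fun j => by
    rw [hm', hk]; ring
  -- product lemma 1
  have lem1 : qp z m (L + 1) * Re = qp (2 * z) (2 * m) (L + 1) := by
    rw [hRe, qp, qp, ← Finset.prod_mul_distrib]
    refine Finset.prod_congr rfl fun j _ => ?_
    rw [key1 j, pow_mul]
    ring
  have lem2 : qp (y * z) m L * Ro = qp (m + 2 * z) (2 * m) L := by
    rw [hRo, qp, qp, ← Finset.prod_mul_distrib]
    refine Finset.prod_congr rfl fun j _ => ?_
    rw [key2 j, pow_mul]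
    ring
  have hA1 : A * (Re * H) = 1 := by
    have e1 : A * (Re * H) =
        ((qp z m (L + 1) * Re) * ∏ j ∈ Finset.range (L + 1), g (2 * z + j * (2 * m))) *
          ((qp (m + 2 * z) (2 * m) L) * ∏ j ∈ Finset.range L, g ((m + 2 * z) + j * (2 * m))) := by
      rw [hA, hH]; ring
    rw [e1, lem1, qp_mul_g _ _ _ (by positivity), qp_mul_g _ _ _ (by positivity), mul_one]
  have hB1 : B * (Ro * H) = 1 := by
    have e1 : B * (Ro * H) =
        ((qp (y * z) m L * Ro) * ∏ j ∈ Finset.range L, g ((m + 2 * z) + j * (2 * m))) *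
          ((qp (2 * z) (2 * m) (L + 1)) * ∏ j ∈ Finset.range (L + 1), g (2 * z + j * (2 * m))) := by
      rw [hB, hH]; ring
    rw [e1, lem2, qp_mul_g _ _ _ (by positivity), qp_mul_g _ _ _ (by positivity), mul_one]
  -- identify the inverses
  have hA0 : PowerSeries.constantCoeff (R := ℚ) A ≠ 0 := by
    have := congrArg (PowerSeries.constantCoeff (R := ℚ)) hA1
    rw [map_mul, map_one] at this
    exact left_ne_zero_of_mul_eq_one this
  have hB0 : PowerSeries.constantCoeff (R := ℚ) B ≠ 0 := by
    have := congrArg (PowerSeries.constantCoeff (R := ℚ)) hB1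
    rw [map_mul, map_one] at this
    exact left_ne_zero_of_mul_eq_one this
  have hAinv : A⁻¹ = Re * H :=
    ((PowerSeries.eq_inv_iff_mul_eq_one hA0).mpr (by rw [mul_comm]; exact hA1)).symm
  have hBinv : B⁻¹ = Ro * H :=
    ((PowerSeries.eq_inv_iff_mul_eq_one hB0).mpr (by rw [mul_comm]; exact hB1)).symm
  -- the difference
  have hdiff : A⁻¹ - B⁻¹ = (Re - Ro) * H := by
    rw [hAinv, hBinv, sub_mul]
  -- expansion of Re and Ro
  set P : PowerSeries ℚ := ∏ j ∈ Finset.range L, (1 + XX ^ (z + j * m)) with hP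
  have hReP : Re = P * (1 + XX ^ (z + L * m)) := by
    rw [hRe, Finset.prod_range_succ, hP]
  have hPsum : P = ∑ t ∈ (Finset.range L).powerset, ∏ j ∈ t, XX ^ (z + j * m) := by
    rw [hP]
    rw [Finset.prod_congr rfl (fun j _ => add_comm 1 (XX ^ (z + j * m)))]
    rw [Finset.prod_add]
    refine Finset.sum_congr rfl fun t _ => ?_
    rw [Finset.prod_const_one, mul_one]
  have hRosum : Ro = ∑ t ∈ (Finset.range L).powerset,
      XX ^ (2 * k * z * t.card) * ∏ j ∈ t, XX ^ (z + j * m) := by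
    rw [hRo]
    rw [Finset.prod_congr rfl (fun j _ => add_comm 1 (XX ^ (y * z + j * m)))]
    rw [Finset.prod_add]
    refine Finset.sum_congr rfl fun t _ => ?_
    rw [Finset.prod_const_one, mul_one]
    rw [Finset.prod_congr rfl (fun j _ => by
      rw [show y * z + j * m = (z + j * m) + 2 * k * z by rw [hk]; ring, pow_add])]
    rw [Finset.prod_mul_distrib, Finset.prod_const, ← pow_mul]
    ring
  -- geometric decomposition
  have geom : ∀ c : ℕ, (1 : PowerSeries ℚ) - XX ^ (2 * k * z * c) =
      (1 - XX ^ (2 * z)) * ∑ i ∈ Finset.range (k * c), (XX ^ (2 * z)) ^ i := by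
    intro c
    rw [show 2 * k * z * c = (2 * z) * (k * c) by ring, pow_mul]
    linear_combination geom_sum_mul (XX ^ (2 * z)) (k * c)
  -- peel off g (2 z) from H
  set Hrest : PowerSeries ℚ :=
    (∏ j ∈ Finset.range L, g (2 * z + (j + 1) * (2 * m))) *
      (∏ j ∈ Finset.range L, g ((m + 2 * z) + j * (2 * m))) with hHrest
  have hHsplit : H = g (2 * z) * Hrest := by
    rw [hH, hHrest, Finset.prod_range_succ']
    rw [show 2 * z + 0 * (2 * m) = 2 * z by ring]
    ring
  have hgH : (1 - XX ^ (2 * z)) * H = Hrest := by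
    rw [hHsplit, ← mul_assoc, g_spec (by positivity), one_mul]
  -- final decomposition
  have final : A⁻¹ - B⁻¹ =
      XX ^ (z + L * m) * (P * H) +
        ∑ t ∈ (Finset.range L).powerset,
          (∑ i ∈ Finset.range (k * t.card), (XX ^ (2 * z)) ^ i) *
            ((∏ j ∈ t, XX ^ (z + j * m)) * Hrest) := by
    rw [hdiff]
    have e1 : Re - Ro = XX ^ (z + L * m) * P + (P - Ro) := by
      rw [hReP]; ring
    rw [e1, add_mul, sub_mul]
    congr 1
    · ring
    have e2 : P * H - Ro * H = ∑ t ∈ (Finset.range L).powerset,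
        ((1 : PowerSeries ℚ) - XX ^ (2 * k * z * t.card)) *
          ((∏ j ∈ t, XX ^ (z + j * m)) * H) := by
      rw [hPsum, hRosum, Finset.sum_mul, Finset.sum_mul, ← Finset.sum_sub_distrib]
      refine Finset.sum_congr rfl fun t _ => ?_
      ring
    rw [e2]
    refine Finset.sum_congr rfl fun t _ => ?_
    rw [geom t.card]
    calc (1 - XX ^ (2 * z)) * (∑ i ∈ Finset.range (k * t.card), (XX ^ (2 * z)) ^ i) *
          ((∏ j ∈ t, XX ^ (z + j * m)) * H)
        = (∑ i ∈ Finset.range (k * t.card), (XX ^ (2 * z)) ^ i) *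
          ((∏ j ∈ t, XX ^ (z + j * m)) * ((1 - XX ^ (2 * z)) * H)) := by ring
      _ = _ := by rw [hgH]
  -- nonnegativity
  have nnH : NN H := by
    rw [hH]
    exact nn_mul (nn_prod fun j _ => nn_g _) (nn_prod fun j _ => nn_g _)
  have nnHrest : NN Hrest := by
    rw [hHrest]
    exact nn_mul (nn_prod fun j _ => nn_g _) (nn_prod fun j _ => nn_g _)
  have nnP : NN P := by
    rw [hP]
    exact nn_prod fun j _ => nn_one_add_X_pow _
  have nnfinal : NN (A⁻¹ - B⁻¹) := by
    rw [final]
    refine nn_add (nn_mul (nn_X_pow _) (nn_mul nnP nnH)) (nn_sum fun t _ => ?_)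
    refine nn_mul (nn_sum fun i _ => ?_) (nn_mul (nn_prod fun j _ => nn_X_pow _) nnHrest)
    rw [← pow_mul]
    exact nn_X_pow _
  exact nnfinal x
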